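/- For all m, n ∈ ℕ+, the total number s(m,n) of subgroups of the group ℤ_m × ℤ_n equals Σ_{a ∣ m} Σ_{b ∣ n} gcd(a,b), the double sum running over all positive divisors a of m and b of n. -/

import Mathlib

local notation "Acl" => AddSubgroup.closure

lemma closure_neg_singleton {G : Type*} [AddGroup G] (x : G) :
    Acl ({-x} : Set G) = Acl {x} := by
  ext y
  rw [AddSubgroup.mem_closure_singleton, AddSubgroup.mem_closure_singleton]
  exact ⟨fun ⟨k, hk⟩ => ⟨-k, by simpa using hk⟩, fun ⟨k, hk⟩ => ⟨-k, by simpa using hk⟩⟩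

/-- membership of natural casts in closure of a divisor cast -/
lemma mem_closure_nat {m : ℕ} (a : ℕ) (ha : a ∣ m) (x : ℕ) :
    (x : ZMod m) ∈ Acl {(a : ZMod m)} ↔ a ∣ x := by
  rw [AddSubgroup.mem_closure_singleton]
  constructor
  · rintro ⟨k, hk⟩
    have : ((k * a - x : ℤ) : ZMod m) = 0 := by
      push_cast
      rw [← hk]
      push_cast [zsmul_eq_mul]
      ring
    rw [ZMod.intCast_zmod_eq_zero_iff_dvd] at this
    have ham : (a : ℤ) ∣ m := Int.natCast_dvd_natCast.2 ha
    have hax : (a : ℤ) ∣ (x : ℤ) := by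
      have h1 : (a:ℤ) ∣ k * a - x := dvd_trans ham this
      have h2 : (a:ℤ) ∣ k * a := ⟨k, mul_comm _ _⟩
      have := dvd_sub h2 h1
      simpa using this
    exact_mod_cast hax
  · rintro ⟨j, rfl⟩
    exact ⟨j, by push_cast [zsmul_eq_mul]; ring⟩

lemma closure_nat_inj {m : ℕ} {a b : ℕ} (ha : a ∣ m) (hb : b ∣ m)
    (h : Acl {(a : ZMod m)} = Acl {(b : ZMod m)}) : a = b := by
  have h1 : b ∣ a := by
    have : (a : ZMod m) ∈ Acl {(b : ZMod m)} := h ▸ AddSubgroup.subset_closure rfl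
    exact (mem_closure_nat b hb a).1 this
  have h2 : a ∣ b := by
    have : (b : ZMod m) ∈ Acl {(a : ZMod m)} := h ▸ AddSubgroup.subset_closure rfl
    exact (mem_closure_nat a ha b).1 this
  exact Nat.dvd_antisymm h2 h1

lemma exists_divisor_closure {m : ℕ} (H : AddSubgroup (ZMod m)) :
    ∃ a, a ∣ m ∧ H = Acl {(a : ZMod m)} := by
  obtain ⟨g, hg⟩ := Int.subgroup_cyclic (H.comap (Int.castAddHom (ZMod m)))
  have hmem : ((m : ℤ)) ∈ Acl ({g} : Set ℤ) := by
    rw [← hg]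
    simp only [AddSubgroup.mem_comap, Int.coe_castAddHom]
    push_cast
    simpa using H.zero_mem
  rw [AddSubgroup.mem_closure_singleton] at hmem
  obtain ⟨k, hk⟩ := hmem
  have hgd : g ∣ (m : ℤ) := ⟨k, by rw [← hk, zsmul_eq_mul, Int.cast_id, mul_comm]⟩
  have hda : g.natAbs ∣ m := by
    have := Int.natAbs_dvd_natAbs.2 hgd
    simpa using this
  refine ⟨g.natAbs, hda, ?_⟩
  have hsurj : Function.Surjective (Int.castAddHom (ZMod m)) := ZMod.intCast_surjective
  have hH : (H.comap (Int.castAddHom (ZMod m))).map (Int.castAddHom (ZMod m)) = H :=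
    AddSubgroup.map_comap_eq_self_of_surjective hsurj H
  rw [hg] at hH
  rw [← hH, AddMonoidHom.map_closure]
  have himg : (Int.castAddHom (ZMod m)) '' {g} = {((g : ℤ) : ZMod m)} := by simp
  rw [himg]
  have key : ((g : ℤ) : ZMod m) = ((g.natAbs : ℕ) : ZMod m) ∨
      ((g : ℤ) : ZMod m) = -((g.natAbs : ℕ) : ZMod m) := by
    rcases Int.natAbs_eq g with he | he
    · left
      conv_lhs => rw [he]
      simp
    · right
      conv_lhs => rw [he]
      simp
  rcases key with h | h
  · rw [h]
  · rw [h]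
    exact closure_neg_singleton _

section helpers
variable {m n : ℕ}

lemma zsmul_cast_pair (s t : ℤ) (x y : ℕ) :
    s • ((x : ZMod m)) + t • ((y : ZMod m)) = ((s * x + t * y : ℤ) : ZMod m) := by
  push_cast [zsmul_eq_mul]
  ring

lemma zsmul_cast (t : ℤ) (y : ℕ) : t • ((y : ZMod m)) = ((t * y : ℤ) : ZMod m) := by
  push_cast [zsmul_eq_mul]
  ring

lemma zsmul_zero_iff_dvd {d : ℕ} (hd : d ∣ n) (hd0 : 0 < d) (t : ℤ) :
    t • (d : ZMod n) = 0 ↔ ((n / d : ℕ) : ℤ) ∣ t := by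
  rw [zsmul_cast, ZMod.intCast_zmod_eq_zero_iff_dvd]
  have hnd : (n : ℤ) = ((n / d : ℕ) : ℤ) * d := by
    rw [← Nat.cast_mul, Nat.div_mul_cancel hd]
  rw [hnd]
  rw [mul_dvd_mul_iff_right (by exact_mod_cast hd0.ne' : (d : ℤ) ≠ 0)]

/-- the subgroup generated by `(a, 0)` and `(c, d)` -/
def genSub (m n a d c : ℕ) : AddSubgroup (ZMod m × ZMod n) :=
  Acl {((a : ZMod m), (0 : ZMod n)), ((c : ZMod m), (d : ZMod n))}

lemma mem_genSub {a d c : ℕ} {z : ZMod m × ZMod n} :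
    z ∈ genSub m n a d c ↔
      ∃ s t : ℤ, z.1 = ((s * a + t * c : ℤ) : ZMod m) ∧ z.2 = t • (d : ZMod n) := by
  rw [genSub, AddSubgroup.mem_closure_pair]
  constructor
  · rintro ⟨s, t, rfl⟩
    refine ⟨s, t, ?_, ?_⟩
    · simp only [Prod.fst_add, Prod.smul_fst]
      rw [zsmul_cast_pair]
    · simp only [Prod.snd_add, Prod.smul_snd, smul_zero, zero_add]
  · rintro ⟨s, t, h1, h2⟩
    refine ⟨s, t, ?_⟩
    ext
    · simp only [Prod.fst_add, Prod.smul_fst]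
      rw [zsmul_cast_pair, h1]
    · simp only [Prod.snd_add, Prod.smul_snd, smul_zero, zero_add, h2]

lemma comap_inl_genSub (hn : 0 < n) {a d c : ℕ} (hd : d ∣ n) (hdvd : a ∣ (n / d) * c) :
    (genSub m n a d c).comap (AddMonoidHom.inl (ZMod m) (ZMod n)) = Acl {(a : ZMod m)} := by
  have hd0 : 0 < d := Nat.pos_of_dvd_of_pos hd hn
  ext x
  rw [AddSubgroup.mem_comap]
  simp only [AddMonoidHom.inl_apply]
  rw [mem_genSub]
  constructor
  · rintro ⟨s, t, h1, h2⟩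
    simp only at h1 h2
    rw [eq_comm, zsmul_zero_iff_dvd hd hd0] at h2
    obtain ⟨u, rfl⟩ := h2
    obtain ⟨w, hw⟩ := hdvd
    have hw' : ((n / d : ℕ) : ℤ) * c = (a : ℤ) * w := by exact_mod_cast hw
    rw [AddSubgroup.mem_closure_singleton]
    refine ⟨s + u * w, ?_⟩
    rw [zsmul_cast, h1]
    congr 1
    linear_combination -u * hw'
  · intro hx
    rw [AddSubgroup.mem_closure_singleton] at hx
    obtain ⟨s, hs⟩ := hx
    refine ⟨s, 0, ?_, ?_⟩
    · simp only
      rw [← hs, zsmul_cast]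
      push_cast
      ring_nf
    · simp

lemma map_snd_genSub {a d c : ℕ} :
    (genSub m n a d c).map (AddMonoidHom.snd (ZMod m) (ZMod n)) = Acl {(d : ZMod n)} := by
  apply le_antisymm
  · rw [AddSubgroup.map_le_iff_le_comap, genSub, AddSubgroup.closure_le]
    rintro z (rfl | rfl)
    · simp only [Set.mem_preimage, SetLike.mem_coe, AddSubgroup.mem_comap,
        AddMonoidHom.coe_snd]
      exact AddSubgroup.zero_mem _
    · simp only [Set.mem_preimage, SetLike.mem_coe, AddSubgroup.mem_comap,
        AddMonoidHom.coe_snd]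
      exact AddSubgroup.subset_closure rfl
  · rw [AddSubgroup.closure_le]
    rintro z rfl
    exact ⟨((c : ZMod m), (d : ZMod n)), AddSubgroup.subset_closure (by simp), rfl⟩

lemma genSub_exists_c (hn : 0 < n) {a d c : ℕ} (hd : d ∣ n) (hdvd : a ∣ (n / d) * c)
    {x : ZMod m} (hx : ((x : ZMod m), (d : ZMod n)) ∈ genSub m n a d c) :
    ∃ t : ℤ, x = ((c + t * a : ℤ) : ZMod m) := by
  have hd0 : 0 < d := Nat.pos_of_dvd_of_pos hd hn
  rw [mem_genSub] at hx
  obtain ⟨s, t, h1, h2⟩ := hx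
  simp only at h1 h2
  have h2' : (t - 1) • (d : ZMod n) = 0 := by
    rw [sub_smul, one_smul, sub_eq_zero, ← h2]
  rw [zsmul_zero_iff_dvd hd hd0] at h2'
  obtain ⟨u, hu⟩ := h2'
  obtain ⟨w, hw⟩ := hdvd
  have hw' : ((n / d : ℕ) : ℤ) * c = (a : ℤ) * w := by exact_mod_cast hw
  refine ⟨s + u * w, ?_⟩
  rw [h1]
  congr 1
  have ht : t = 1 + ((n / d : ℕ) : ℤ) * u := by omega
  rw [ht]
  linear_combination u * hw'
end helpers


section surj
variable {m n : ℕ}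

lemma genSub_surjective (hm : 0 < m) (hn : 0 < n) (H : AddSubgroup (ZMod m × ZMod n)) :
    ∃ a d c : ℕ, a ∣ m ∧ d ∣ n ∧ c < a ∧ a ∣ (n / d) * c ∧ H = genSub m n a d c := by
  haveI : NeZero m := ⟨hm.ne'⟩
  obtain ⟨a, ha, hK1⟩ := exists_divisor_closure (H.comap (AddMonoidHom.inl (ZMod m) (ZMod n)))
  obtain ⟨d, hd, hP2⟩ := exists_divisor_closure (H.map (AddMonoidHom.snd (ZMod m) (ZMod n)))
  have ha0 : 0 < a := Nat.pos_of_dvd_of_pos ha hm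
  have hd0 : 0 < d := Nat.pos_of_dvd_of_pos hd hn
  have hmemK1 : ∀ x : ZMod m, ((x, (0 : ZMod n)) ∈ H ↔ x ∈ Acl {(a : ZMod m)}) := by
    intro x
    rw [← hK1, AddSubgroup.mem_comap]
    rfl
  have hdP2 : (d : ZMod n) ∈ H.map (AddMonoidHom.snd (ZMod m) (ZMod n)) := by
    rw [hP2]; exact AddSubgroup.subset_closure rfl
  obtain ⟨z₀, hz₀, hz₀2⟩ := hdP2
  set c₀ : ZMod m := z₀.1 with hc₀
  have hz' : ((c₀ : ZMod m), (d : ZMod n)) ∈ H := by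
    have : z₀ = (z₀.1, z₀.2) := rfl
    rw [hc₀, ← hz₀2]
    exact this ▸ hz₀
  set c : ℕ := c₀.val % a with hc
  have hca : c < a := Nat.mod_lt _ ha0
  have hval : ((c₀.val : ℕ) : ZMod m) = c₀ := ZMod.natCast_rightInverse c₀
  set q : ℕ := c₀.val / a with hq
  have hdm : a * q + c = c₀.val := Nat.div_add_mod c₀.val a
  have hcle : c ≤ c₀.val := by omega
  -- divisibility condition
  have hed : n / d * d = n := Nat.div_mul_cancel hd
  have hdvd : a ∣ (n / d) * c := by
    have hsm : (n / d) • ((c₀ : ZMod m), (d : ZMod n)) ∈ H := AddSubgroup.nsmul_mem H hz' _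
    have heq : (n / d) • ((c₀ : ZMod m), (d : ZMod n)) =
        ((((n / d) * c₀.val : ℕ) : ZMod m), (0 : ZMod n)) := by
      ext
      · show (n / d) • c₀ = (((n / d) * c₀.val : ℕ) : ZMod m)
        rw [nsmul_eq_mul]
        push_cast
        rw [hval]
      · show (n / d) • (d : ZMod n) = 0
        rw [nsmul_eq_mul, ← Nat.cast_mul, hed, ZMod.natCast_self]
    rw [heq] at hsm
    have h1 : a ∣ (n / d) * c₀.val := (mem_closure_nat a ha _).1 ((hmemK1 _).1 hsm)
    have h2 : (n / d) * c₀.val = a * ((n / d) * q) + (n / d) * c := by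
      rw [← hdm]; ring
    rw [h2] at h1
    exact (Nat.dvd_add_right ⟨(n / d) * q, rfl⟩).1 h1
  -- (c, d) ∈ H
  have hcd : (((c : ℕ) : ZMod m), (d : ZMod n)) ∈ H := by
    have hdiff : ((c₀ - (c : ZMod m)), (0 : ZMod n)) ∈ H := by
      apply (hmemK1 _).2
      have : c₀ - ((c : ℕ) : ZMod m) = (((c₀.val - c : ℕ)) : ZMod m) := by
        rw [Nat.cast_sub hcle, hval]
      rw [this]
      exact (mem_closure_nat a ha _).2 ⟨q, by omega⟩
    have := H.sub_mem hz' hdiff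
    have heq : ((c₀ : ZMod m), (d : ZMod n)) - ((c₀ - (c : ZMod m)), (0 : ZMod n)) =
        (((c : ℕ) : ZMod m), (d : ZMod n)) := by
      ext
      · show c₀ - (c₀ - (c : ZMod m)) = _
        ring
      · show (d : ZMod n) - 0 = (d : ZMod n)
        ring
    rwa [heq] at this
  refine ⟨a, d, c, ha, hd, hca, hdvd, ?_⟩
  apply le_antisymm
  · intro z hzH
    rw [mem_genSub]
    have hz2' : z.2 ∈ Acl {(d : ZMod n)} := by
      rw [← hP2]; exact ⟨z, hzH, rfl⟩
    obtain ⟨t, ht⟩ := AddSubgroup.mem_closure_singleton.1 hz2'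
    have hfst : ((z.1 - t • ((c : ℕ) : ZMod m)), (0 : ZMod n)) ∈ H := by
      have hmem := H.sub_mem hzH (AddSubgroup.zsmul_mem H hcd t)
      have heq : z - t • (((c : ℕ) : ZMod m), (d : ZMod n)) =
          ((z.1 - t • ((c : ℕ) : ZMod m)), (0 : ZMod n)) := by
        ext
        · show z.1 - t • ((c : ℕ) : ZMod m) = _
          rfl
        · show z.2 - t • (d : ZMod n) = 0
          rw [ht, sub_self]
      rwa [heq] at hmem
    obtain ⟨s, hs⟩ := AddSubgroup.mem_closure_singleton.1 ((hmemK1 _).1 hfst)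
    refine ⟨s, t, ?_, ht.symm⟩
    rw [← zsmul_cast_pair, hs]
    ring
  · rw [genSub, AddSubgroup.closure_le]
    rintro z (rfl | rfl)
    · exact (hmemK1 _).2 (AddSubgroup.subset_closure rfl)
    · exact hcd
end surj

section count

lemma filter_dvd_card (k g : ℕ) (hk : 0 < k) :
    ((Finset.range (k * g)).filter (fun c => k ∣ c)).card = g := by
  have himg : (Finset.range (k * g)).filter (fun c => k ∣ c) =
      (Finset.range g).image (fun j => k * j) := by
    ext x
    simp only [Finset.mem_filter, Finset.mem_range, Finset.mem_image]
    constructor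
    · rintro ⟨hlt, j, rfl⟩
      exact ⟨j, (mul_lt_mul_iff_right₀ hk).1 hlt, rfl⟩
    · rintro ⟨j, hj, rfl⟩
      exact ⟨(mul_lt_mul_iff_right₀ hk).2 hj, ⟨j, rfl⟩⟩
  rw [himg, Finset.card_image_of_injective _ (mul_right_injective₀ hk.ne'), Finset.card_range]

lemma count_gcd (a e : ℕ) (ha : 0 < a) (he : 0 < e) :
    ((Finset.range a).filter (fun c => a ∣ e * c)).card = Nat.gcd a e := by
  set g := Nat.gcd a e with hg
  have hg0 : 0 < g := Nat.gcd_pos_of_pos_left e ha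
  set k := a / g with hk
  have hak : a = g * k := (Nat.mul_div_cancel' (Nat.gcd_dvd_left a e)).symm
  set e' := e / g with he'
  have hee : e = g * e' := (Nat.mul_div_cancel' (Nat.gcd_dvd_right a e)).symm
  have hk0 : 0 < k := by
    rcases Nat.eq_zero_or_pos k with h0 | h0
    · rw [h0, mul_zero] at hak; omega
    · exact h0
  have hcop : Nat.Coprime k e' := Nat.coprime_div_gcd_div_gcd hg0
  have hiff : ∀ c, a ∣ e * c ↔ k ∣ c := by
    intro c
    constructor
    · intro h
      have h1 : g * k ∣ g * (e' * c) := by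
        rw [← hak, ← mul_assoc, ← hee]; exact h
      have h2 : k ∣ c * e' := by
        rw [mul_comm]
        exact (mul_dvd_mul_iff_left hg0.ne').1 h1
      exact hcop.dvd_of_dvd_mul_right h2
    · rintro ⟨j, rfl⟩
      exact ⟨e' * j, by rw [hak, hee]; ring⟩
  have hfe : (Finset.range a).filter (fun c => a ∣ e * c) =
      (Finset.range a).filter (fun c => k ∣ c) := by
    apply Finset.filter_congr
    intro c _
    simp only [hiff c]
  rw [hfe, show a = k * g by rw [hak]; ring, filter_dvd_card k g hk0]

end count

/-- The total number of subgroups of `ℤ_m × ℤ_n` equals `Σ_{a ∣ m} Σ_{b ∣ n} gcd(a,b)`. -/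
theorem card_addSubgroups_two (m n : ℕ) (hm : 0 < m) (hn : 0 < n) :
    Nat.card (AddSubgroup (ZMod m × ZMod n)) =
      ∑ a ∈ m.divisors, ∑ b ∈ n.divisors, Nat.gcd a b := by
  classical
  set S : Finset (ℕ × ℕ × ℕ) :=
    (m.divisors ×ˢ n.divisors ×ˢ Finset.range m).filter
      (fun x => x.2.2 < x.1 ∧ x.1 ∣ (n / x.2.1) * x.2.2) with hS
  have hmemS : ∀ x : ℕ × ℕ × ℕ, x ∈ S ↔
      (x.1 ∣ m ∧ x.2.1 ∣ n ∧ x.2.2 < x.1 ∧ x.1 ∣ (n / x.2.1) * x.2.2) := by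
    intro x
    simp only [hS, Finset.mem_filter, Finset.mem_product, Nat.mem_divisors, Finset.mem_range]
    constructor
    · rintro ⟨⟨h1, h2, h3⟩, h4, h5⟩
      exact ⟨h1.1, h2.1, h4, h5⟩
    · rintro ⟨h1, h2, h3, h4⟩
      have ha0 : x.1 ≤ m := Nat.le_of_dvd hm h1
      exact ⟨⟨⟨h1, hm.ne'⟩, ⟨h2, hn.ne'⟩, lt_of_lt_of_le h3 ha0⟩, h3, h4⟩
  have hbij : Function.Bijective
      (fun x : {y // y ∈ S} => genSub m n x.1.1 x.1.2.1 x.1.2.2) := by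
    constructor
    · rintro ⟨x, hx⟩ ⟨x', hx'⟩ h
      simp only at h
      rw [hmemS] at hx hx'
      obtain ⟨ha, hd, hca, hdvd⟩ := hx
      obtain ⟨ha', hd', hca', hdvd'⟩ := hx'
      have haa : x.1 = x'.1 := by
        apply closure_nat_inj ha ha'
        rw [← comap_inl_genSub hn hd hdvd, ← comap_inl_genSub hn hd' hdvd', h]
      have hdd : x.2.1 = x'.2.1 := by
        apply closure_nat_inj hd hd'
        have e1 := map_snd_genSub (m := m) (n := n) (a := x.1) (d := x.2.1) (c := x.2.2)
        have e2 := map_snd_genSub (m := m) (n := n) (a := x'.1) (d := x'.2.1) (c := x'.2.2)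
        rw [← e1, ← e2, h]
      have hcc : x.2.2 = x'.2.2 := by
        have hc'mem : (((x'.2.2 : ℕ) : ZMod m), ((x.2.1 : ℕ) : ZMod n)) ∈
            genSub m n x.1 x.2.1 x.2.2 := by
          rw [h, hdd]
          exact AddSubgroup.subset_closure (by right; rfl)
        obtain ⟨t, ht⟩ := genSub_exists_c hn hd hdvd hc'mem
        have hz : (((x.2.2 : ℕ) + t * x.1 - (x'.2.2 : ℕ) : ℤ) : ZMod m) = 0 := by
          push_cast
          rw [ht]
          push_cast
          ring
        rw [ZMod.intCast_zmod_eq_zero_iff_dvd] at hz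
        have ham : (x.1 : ℤ) ∣ (m : ℤ) := Int.natCast_dvd_natCast.2 ha
        have h1 : (x.1 : ℤ) ∣ ((x.2.2 : ℕ) + t * x.1 - (x'.2.2 : ℕ) : ℤ) :=
          dvd_trans ham hz
        have h2 : (x.1 : ℤ) ∣ ((x.2.2 : ℤ) - (x'.2.2 : ℤ)) := by
          have h3 : (x.1 : ℤ) ∣ t * x.1 := dvd_mul_left _ _
          have := dvd_sub h1 h3
          simpa [sub_sub_eq_add_sub, add_sub_right_comm] using this
        have h4 : ((x.2.2 : ℤ) - (x'.2.2 : ℤ)) = 0 := by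
          refine Int.eq_zero_of_dvd_of_natAbs_lt_natAbs h2 ?_
          omega
        omega
      exact Subtype.ext (Prod.ext haa (Prod.ext hdd hcc))
    · intro H
      obtain ⟨a, d, c, ha, hd, hca, hdvd, hH⟩ := genSub_surjective hm hn H
      exact ⟨⟨(a, d, c), (hmemS _).2 ⟨ha, hd, hca, hdvd⟩⟩, hH.symm⟩
  have hcard1 : Nat.card (AddSubgroup (ZMod m × ZMod n)) = S.card := by
    rw [← Nat.card_eq_of_bijective _ hbij, Nat.card_eq_finsetCard]
  rw [hcard1]
  -- now count S
  have hcard2 : S.card = ∑ a ∈ m.divisors, ∑ d ∈ n.divisors, Nat.gcd a (n / d) := by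
    rw [hS, Finset.card_filter, Finset.sum_product]
    refine Finset.sum_congr rfl (fun a hamem => ?_)
    rw [Finset.sum_product]
    refine Finset.sum_congr rfl (fun d hdmem => ?_)
    rw [← Finset.card_filter]
    have ha0 : 0 < a := Nat.pos_of_mem_divisors hamem
    have hadvd : a ∣ m := (Nat.mem_divisors.1 hamem).1
    have hddvd : d ∣ n := (Nat.mem_divisors.1 hdmem).1
    have hd0 : 0 < d := Nat.pos_of_mem_divisors hdmem
    have he0 : 0 < n / d := Nat.div_pos (Nat.le_of_dvd hn hddvd) hd0
    have hrange : (Finset.range m).filter (fun c => c < a ∧ a ∣ (n / d) * c) =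
        (Finset.range a).filter (fun c => a ∣ (n / d) * c) := by
      ext c
      simp only [Finset.mem_filter, Finset.mem_range]
      have haM : a ≤ m := Nat.le_of_dvd hm hadvd
      exact ⟨fun ⟨_, h1, h2⟩ => ⟨h1, h2⟩, fun ⟨h1, h2⟩ => ⟨lt_of_lt_of_le h1 haM, h1, h2⟩⟩
    rw [hrange, count_gcd a (n / d) ha0 he0]
  rw [hcard2]
  refine Finset.sum_congr rfl (fun a _ => ?_)
  exact Nat.sum_div_divisors n (Nat.gcd a)
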